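/- Let μ > 0, L > μ, and define g(x) = ((L−μ)/8)(⟨x, Ax⟩ − 2x₁) + (μ/2)‖x‖² on ℓ², where A is the tridiagonal operator with 2 on the diagonal and −1 off-diagonal. Then g is μ-strongly convex and L-smooth, and the point x⋆ with x⋆ⱼ = qʲ where q = (√κ − 1)/(√κ + 1), κ = L/μ, is a minimizer of g. -/

import Mathlib

open RealInnerProductSpace

open scoped ENNReal

namespace NesterovAux

noncomputable section

local notation "E" => lp (fun _ : ℕ => ℝ) 2

lemma summable_mul (x y : E) : Summable fun j => x j * y j := by
  have := lp.summable_inner (𝕜 := ℝ) x y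
  simpa [RCLike.inner_apply, mul_comm] using this

lemma inner_eq (x y : E) : ⟪x, y⟫ = ∑' j, x j * y j := by
  simpa [RCLike.inner_apply, mul_comm] using lp.inner_eq_tsum (𝕜 := ℝ) x y

lemma norm_sq_eq (x : E) : ‖x‖ ^ 2 = ∑' j, x j * x j := by
  rw [← real_inner_self_eq_norm_sq, inner_eq]

lemma summable_sq (x : E) : Summable fun j : ℕ => ‖x j‖ ^ (2 : ℝ≥0∞).toReal :=
  (memℓp_gen_iff (by norm_num)).1 (lp.memℓp x)

lemma memℓp_shiftL (x : E) : Memℓp (fun j : ℕ => x (j + 1)) 2 :=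
  memℓp_gen <| (summable_sq x).comp_injective (add_left_injective 1)

lemma memℓp_shiftR (x : E) :
    Memℓp (fun j : ℕ => if j = 0 then (0 : ℝ) else x (j - 1)) 2 := by
  apply memℓp_gen
  rw [← (summable_nat_add_iff 1)]
  simpa using summable_sq x

def shiftL (x : E) : E := ⟨fun j => x (j + 1), memℓp_shiftL x⟩

def shiftR (x : E) : E :=
  ⟨fun j => if j = 0 then (0 : ℝ) else x (j - 1), memℓp_shiftR x⟩

@[simp] lemma shiftL_apply (x : E) (j : ℕ) : shiftL x j = x (j + 1) := rfl

@[simp] lemma shiftR_apply (x : E) (j : ℕ) :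
    shiftR x j = if j = 0 then (0 : ℝ) else x (j - 1) := rfl

lemma tsum_shift (f : ℕ → ℝ) (hf0 : f 0 = 0) : ∑' j : ℕ, f (j + 1) = ∑' j, f j := by
  refine Function.Injective.tsum_eq (g := fun j : ℕ => j + 1) (add_left_injective 1) ?_
  intro j hj
  rcases j with _ | n
  · exact absurd hf0 hj
  · exact ⟨n, rfl⟩

lemma summable_sq' (x : E) : Summable fun j : ℕ => x j * x j := summable_mul x x

lemma sq_shift_le (x : E) : ∑' j : ℕ, x (j + 1) * x (j + 1) ≤ ∑' j, x j * x j := by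
  have h1 : ∑' j : ℕ, x (j + 1) * x (j + 1)
      = ∑' j : ℕ, (if j = 0 then (0:ℝ) else x j * x j) := by
    rw [← tsum_shift (fun j => if j = 0 then (0:ℝ) else x j * x j) (by simp)]
    simp
  rw [h1]
  refine Summable.tsum_le_tsum (fun j => ?_) ?_ (summable_sq' x)
  · by_cases h : j = 0 <;> simp [h, mul_self_nonneg]
  · rw [← (summable_nat_add_iff 1)]
    simpa [Function.comp_def] using (summable_sq' x).comp_injective (add_left_injective 1)

lemma norm_shiftL_le (x : E) : ‖shiftL x‖ ≤ ‖x‖ := by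
  have h : ‖shiftL x‖ ^ 2 ≤ ‖x‖ ^ 2 := by
    rw [norm_sq_eq, norm_sq_eq]
    simpa using sq_shift_le x
  exact (pow_le_pow_iff_left₀ (norm_nonneg _) (norm_nonneg _) two_ne_zero).1 h

lemma norm_shiftR_le (x : E) : ‖shiftR x‖ ≤ ‖x‖ := by
  have h : ‖shiftR x‖ ^ 2 ≤ ‖x‖ ^ 2 := by
    rw [norm_sq_eq, norm_sq_eq]
    have h1 : ∑' j : ℕ, shiftR x j * shiftR x j
        = ∑' j : ℕ, shiftR x (j + 1) * shiftR x (j + 1) := by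
      rw [tsum_shift (fun j => shiftR x j * shiftR x j) (by simp)]
    rw [h1]
    simp only [shiftR_apply, Nat.add_sub_cancel, if_neg (Nat.succ_ne_zero _)]
    exact le_refl _
  exact (pow_le_pow_iff_left₀ (norm_nonneg _) (norm_nonneg _) two_ne_zero).1 h

section WithA

variable (A : E →L[ℝ] E)
  (hA0 : ∀ x : E, A x 0 = 2 * x 0 - x 1)
  (hA : ∀ x : E, ∀ j : ℕ, 1 ≤ j → A x j = -x (j - 1) + 2 * x j - x (j + 1))

include hA0 hA

lemma A_eq (x : E) : A x = (2 : ℝ) • x - shiftL x - shiftR x := by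
  apply lp.ext
  funext j
  have hco : ((2 : ℝ) • x - shiftL x - shiftR x : E) j
      = 2 * x j - shiftL x j - shiftR x j := by
    simp [lp.coeFn_sub, lp.coeFn_smul, Pi.smul_apply, Pi.sub_apply, smul_eq_mul]; rfl
  rw [hco]
  rcases j with _ | n
  · simp [hA0 x]
  · rw [hA x (n + 1) (by omega)]
    simp
    ring

lemma norm_A_le (x : E) : ‖A x‖ ≤ 4 * ‖x‖ := by
  rw [A_eq A hA0 hA x]
  calc ‖(2 : ℝ) • x - shiftL x - shiftR x‖
      ≤ ‖(2 : ℝ) • x - shiftL x‖ + ‖shiftR x‖ := norm_sub_le _ _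
    _ ≤ ‖(2 : ℝ) • x‖ + ‖shiftL x‖ + ‖shiftR x‖ :=
        add_le_add_left (norm_sub_le _ _) _
    _ ≤ 2 * ‖x‖ + ‖x‖ + ‖x‖ := by
        have := norm_shiftL_le x
        have := norm_shiftR_le x
        have h2 : ‖(2 : ℝ) • x‖ = 2 * ‖x‖ := by
          rw [norm_smul]; simp
        linarith
    _ = 4 * ‖x‖ := by ring

lemma inner_A_eq (x y : E) :
    ⟪x, A y⟫ = 2 * (∑' j, x j * y j) - (∑' j : ℕ, x j * y (j + 1))
      - (∑' j : ℕ, x (j + 1) * y j) := by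
  have hsum1 : Summable fun j : ℕ => 2 * (x j * y j) := (summable_mul x y).mul_left 2
  have hsum2 : Summable fun j : ℕ => x j * y (j + 1) := summable_mul x (shiftL y)
  have hsum3 : Summable fun j : ℕ => x j * shiftR y j := summable_mul x (shiftR y)
  have hAy : ∀ j, (A y) j = 2 * y j - shiftL y j - shiftR y j := by
    intro j; rw [A_eq A hA0 hA y]
    simp [lp.coeFn_sub, lp.coeFn_smul, Pi.smul_apply, Pi.sub_apply, smul_eq_mul]; rfl
  have h1 : ⟪x, A y⟫ = ∑' j, (2 * (x j * y j) - x j * y (j + 1) - x j * shiftR y j) := by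
    rw [inner_eq]
    congr 1
    funext j
    rw [hAy j]
    rcases eq_or_ne j 0 with h | h <;> simp [h] <;> ring
  rw [h1, Summable.tsum_sub (hsum1.sub hsum2) hsum3, Summable.tsum_sub hsum1 hsum2, tsum_mul_left]
  have h3 : ∑' j : ℕ, x j * shiftR y j = ∑' j : ℕ, x (j + 1) * y j := by
    rw [← tsum_shift (fun j => x j * shiftR y j) (by simp)]
    simp
  rw [h3]

lemma inner_A_symm (x y : E) : ⟪A x, y⟫ = ⟪x, A y⟫ := by
  rw [real_inner_comm, inner_A_eq A hA0 hA y x, inner_A_eq A hA0 hA x y]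
  have e1 : ∑' j : ℕ, y j * x j = ∑' j, x j * y j := tsum_congr fun j => mul_comm _ _
  have e2 : ∑' j : ℕ, y j * x (j + 1) = ∑' j : ℕ, x (j + 1) * y j :=
    tsum_congr fun j => mul_comm _ _
  have e3 : ∑' j : ℕ, y (j + 1) * x j = ∑' j : ℕ, x j * y (j + 1) :=
    tsum_congr fun j => mul_comm _ _
  rw [e1, e2, e3]
  ring

lemma inner_A_nonneg (x : E) : 0 ≤ ⟪x, A x⟫ := by
  rw [inner_A_eq A hA0 hA x x]
  have hself : Summable fun j : ℕ => x j * x j := summable_sq' x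
  have hsh : Summable fun j : ℕ => x (j + 1) * x (j + 1) :=
    hself.comp_injective (add_left_injective 1)
  have hcross : Summable fun j : ℕ => x j * x (j + 1) := summable_mul x (shiftL x)
  have hcross' : Summable fun j : ℕ => x (j + 1) * x j := by
    simpa [mul_comm] using hcross
  have key : (∑' j : ℕ, x j * x (j + 1)) + (∑' j : ℕ, x (j + 1) * x j)
      ≤ (∑' j, x j * x j) + (∑' j : ℕ, x (j + 1) * x (j + 1)) := by
    rw [← Summable.tsum_add hcross hcross', ← Summable.tsum_add hself hsh]
    refine Summable.tsum_le_tsum (fun j => ?_) (hcross.add hcross') (hself.add hsh)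
    nlinarith [sq_nonneg (x j - x (j + 1))]
  have hle := sq_shift_le x
  linarith

end WithA

end

end NesterovAux

set_option maxHeartbeats 1600000 in
open NesterovAux Asymptotics in
/-- Nesterov's worst-case function on `ℓ²`: with `0 < μ < L`, `A` the tridiagonal
`(2, −1)` operator, and `g x = ((L−μ)/8)(⟨x, Ax⟩ − 2x₀) + (μ/2)‖x‖²`, the function `g` is
`μ`-strongly convex and `L`-smooth, and the point `x⋆` with coordinates `x⋆ⱼ = q^(j+1)`
(`q = (√κ−1)/(√κ+1)`, `κ = L/μ`) is a minimizer of `g`. -/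
theorem stmt_10 (μ L : ℝ) (hμ : 0 < μ) (hL : μ < L)
    (A : lp (fun _ : ℕ => ℝ) 2 →L[ℝ] lp (fun _ : ℕ => ℝ) 2)
    (hA0 : ∀ x, A x 0 = 2 * x 0 - x 1)
    (hA : ∀ x, ∀ j : ℕ, 1 ≤ j → A x j = -x (j - 1) + 2 * x j - x (j + 1))
    (g : lp (fun _ : ℕ => ℝ) 2 → ℝ)
    (hg : ∀ x, g x = (L - μ) / 8 * (⟪x, A x⟫ - 2 * x 0) + μ / 2 * ‖x‖ ^ 2) :
    ConvexOn ℝ Set.univ (fun x => g x - μ / 2 * ‖x‖ ^ 2) ∧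
    (∃ D : lp (fun _ : ℕ => ℝ) 2 → lp (fun _ : ℕ => ℝ) 2,
      (∀ x, HasGradientAt g (D x) x) ∧ ∀ x y, ‖D x - D y‖ ≤ L * ‖x - y‖) ∧
    (∀ xs : lp (fun _ : ℕ => ℝ) 2,
      (∀ j : ℕ, xs j = ((Real.sqrt (L / μ) - 1) / (Real.sqrt (L / μ) + 1)) ^ (j + 1)) →
      IsMinOn g Set.univ xs) := by
  have hc : (0:ℝ) ≤ (L - μ) / 8 := by linarith
  have hsymm := inner_A_symm A hA0 hA
  have hpsd := inner_A_nonneg A hA0 hA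
  have hnormA := norm_A_le A hA0 hA
  set e0 : lp (fun _ : ℕ => ℝ) 2 := lp.single 2 0 1 with he0
  have he0app : ∀ j : ℕ, e0 j = if j = 0 then (1:ℝ) else 0 := by
    intro j
    rcases eq_or_ne j 0 with h | h
    · subst h; simp [he0, lp.single_apply_self]
    · rw [he0, if_neg h]
      exact lp.single_apply_ne (E := fun _ : ℕ => ℝ) 2 0 (1 : ℝ) h
  have hinner_e0 : ∀ h : lp (fun _ : ℕ => ℝ) 2, ⟪e0, h⟫ = h 0 := by
    intro h
    rw [inner_eq, tsum_eq_single 0]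
    · rw [he0app 0]; simp
    · intro j hj; rw [he0app j]; simp [hj]

  set D : lp (fun _ : ℕ => ℝ) 2 → lp (fun _ : ℕ => ℝ) 2 :=
    fun x => ((L - μ) / 4) • A x - ((L - μ) / 4) • e0 + μ • x with hD
  -- the key Taylor expansion
  have key : ∀ x h : lp (fun _ : ℕ => ℝ) 2,
      g (x + h) = g x + ⟪D x, h⟫ + ((L - μ) / 8 * ⟪h, A h⟫ + μ / 2 * ‖h‖ ^ 2) := by
    intro x h
    have hDx : ⟪D x, h⟫ = (L - μ) / 4 * ⟪A x, h⟫ - (L - μ) / 4 * h 0 + μ * ⟪x, h⟫ := by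
      rw [hD]
      simp only [inner_add_left, inner_sub_left, real_inner_smul_left, hinner_e0]
    have hx0 : ((x + h : lp (fun _ : ℕ => ℝ) 2) : ∀ _ : ℕ, ℝ) 0 = x 0 + h 0 := by
      simp [lp.coeFn_add]
    have hnorm : ‖x + h‖ ^ 2 = ‖x‖ ^ 2 + 2 * ⟪x, h⟫ + ‖h‖ ^ 2 := norm_add_sq_real x h
    have e1 : ⟪x, A h⟫ = ⟪A x, h⟫ := (hsymm x h).symm
    have e2 : ⟪h, A x⟫ = ⟪A x, h⟫ := real_inner_comm (A x) h
    have hq1 : ⟪x + h, A (x + h)⟫ = ⟪x, A x⟫ + 2 * ⟪A x, h⟫ + ⟪h, A h⟫ := by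
      rw [map_add, inner_add_left, inner_add_right, inner_add_right, e1, e2]
      ring
    rw [hg, hg, hq1, hx0, hnorm, hDx]
    ring
  refine ⟨?_, ⟨D, ?_, ?_⟩, ?_⟩
  · -- convexity of g - μ/2 ‖·‖²
    refine ⟨convex_univ, ?_⟩
    intro x _ y _ a b ha hb hab
    have hb' : b = 1 - a := by linarith
    subst hb'
    simp only [smul_eq_mul]
    rw [hg, hg, hg]
    have hz0 : ((a • x + (1 - a) • y : lp (fun _ : ℕ => ℝ) 2) : ∀ _ : ℕ, ℝ) 0
        = a * x 0 + (1 - a) * y 0 := by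
      simp [lp.coeFn_add, lp.coeFn_smul]; rfl
    have e1 : ⟪x, A y⟫ = ⟪y, A x⟫ := by rw [← hsymm x y, real_inner_comm]
    have hQz : ⟪a • x + (1 - a) • y, A (a • x + (1 - a) • y)⟫
        = a * a * ⟪x, A x⟫ + 2 * (a * (1 - a)) * ⟪y, A x⟫
          + (1 - a) * (1 - a) * ⟪y, A y⟫ := by
      rw [map_add, map_smul, map_smul, inner_add_left, inner_add_right, inner_add_right,
        real_inner_smul_left, real_inner_smul_left, real_inner_smul_right,
        real_inner_smul_right, real_inner_smul_left, real_inner_smul_right,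
        real_inner_smul_left, real_inner_smul_right, e1]
      ring
    have hQd : 0 ≤ ⟪x, A x⟫ - 2 * ⟪y, A x⟫ + ⟪y, A y⟫ := by
      have h0 := hpsd (x - y)
      have : ⟪x - y, A (x - y)⟫ = ⟪x, A x⟫ - 2 * ⟪y, A x⟫ + ⟪y, A y⟫ := by
        rw [map_sub, inner_sub_left, inner_sub_right, inner_sub_right, e1]
        ring
      linarith [this ▸ h0]
    rw [hQz, hz0]
    nlinarith [mul_nonneg hc (mul_nonneg (mul_nonneg ha hb) hQd)]
  · -- gradient
    intro x
    rw [hasGradientAt_iff_hasFDerivAt, hasFDerivAt_iff_isLittleO_nhds_zero]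
    have heq : (fun h => g (x + h) - g x - (InnerProductSpace.toDual ℝ _ (D x)) h)
        = fun h => (L - μ) / 8 * ⟪h, A h⟫ + μ / 2 * ‖h‖ ^ 2 := by
      funext h
      rw [key x h, InnerProductSpace.toDual_apply_apply]
      ring
    rw [heq]
    have hO : (fun h : lp (fun _ : ℕ => ℝ) 2 => (L - μ) / 8 * ⟪h, A h⟫ + μ / 2 * ‖h‖ ^ 2)
        =O[nhds 0] fun h => ‖h‖ ^ 2 := by
      apply IsBigO.of_bound ((L - μ) / 2 + μ / 2)
      filter_upwards with h
      have h1 : |⟪h, A h⟫| ≤ ‖h‖ * ‖A h‖ := abs_real_inner_le_norm _ _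
      have h2 : ‖h‖ * ‖A h‖ ≤ ‖h‖ * (4 * ‖h‖) :=
        mul_le_mul_of_nonneg_left (hnormA h) (norm_nonneg _)
      have h3 : |(L - μ) / 8 * ⟪h, A h⟫ + μ / 2 * ‖h‖ ^ 2|
          ≤ ((L - μ) / 2 + μ / 2) * ‖h‖ ^ 2 := by
        have habs := abs_add_le ((L - μ) / 8 * ⟪h, A h⟫) (μ / 2 * ‖h‖ ^ 2)
        have h4 : |(L - μ) / 8 * ⟪h, A h⟫| ≤ (L - μ) / 2 * ‖h‖ ^ 2 := by
          rw [abs_mul, abs_of_nonneg hc]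
          nlinarith [abs_nonneg ⟪h, A h⟫]
        have h5 : |μ / 2 * ‖h‖ ^ 2| = μ / 2 * ‖h‖ ^ 2 := by
          rw [abs_of_nonneg]; positivity
        nlinarith
      calc ‖(L - μ) / 8 * ⟪h, A h⟫ + μ / 2 * ‖h‖ ^ 2‖
          = |(L - μ) / 8 * ⟪h, A h⟫ + μ / 2 * ‖h‖ ^ 2| := rfl
        _ ≤ ((L - μ) / 2 + μ / 2) * ‖h‖ ^ 2 := h3
        _ = ((L - μ) / 2 + μ / 2) * ‖‖h‖ ^ 2‖ := by
            rw [Real.norm_eq_abs, abs_of_nonneg (by positivity)]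
    have ho : (fun h : lp (fun _ : ℕ => ℝ) 2 => ‖h‖ ^ 2) =o[nhds 0] fun h => h := by
      have hp : (fun t : ℝ => t ^ 2) =o[nhds 0] fun t => t := isLittleO_pow_id one_lt_two
      have := hp.comp_tendsto (tendsto_norm_zero :
        Filter.Tendsto (fun h : lp (fun _ : ℕ => ℝ) 2 => ‖h‖) (nhds 0) (nhds 0))
      exact isLittleO_norm_right.1 this
    exact hO.trans_isLittleO ho
  · -- Lipschitz gradient
    intro x y
    have hDxy : D x - D y = ((L - μ) / 4) • A (x - y) + μ • (x - y) := by
      simp only [hD, map_sub, smul_sub]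
      abel
    rw [hDxy]
    have h1 : ‖((L - μ) / 4) • A (x - y)‖ ≤ (L - μ) / 4 * (4 * ‖x - y‖) := by
      rw [norm_smul, Real.norm_eq_abs, abs_of_nonneg (by linarith : (0:ℝ) ≤ (L - μ) / 4)]
      exact mul_le_mul_of_nonneg_left (hnormA _) (by linarith)
    have h2 : ‖μ • (x - y)‖ = μ * ‖x - y‖ := by
      rw [norm_smul, Real.norm_eq_abs, abs_of_nonneg hμ.le]
    calc ‖((L - μ) / 4) • A (x - y) + μ • (x - y)‖
        ≤ ‖((L - μ) / 4) • A (x - y)‖ + ‖μ • (x - y)‖ := norm_add_le _ _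
      _ ≤ (L - μ) / 4 * (4 * ‖x - y‖) + μ * ‖x - y‖ := by linarith
      _ = L * ‖x - y‖ := by ring
  · -- the minimizer
    intro xs hxs
    set s := Real.sqrt (L / μ) with hsdef
    set q : ℝ := (s - 1) / (s + 1) with hqdef
    have hs0 : (0:ℝ) ≤ s := Real.sqrt_nonneg _
    have hs2 : s ^ 2 = L / μ := Real.sq_sqrt (le_of_lt (div_pos (hμ.trans hL) hμ))
    have hgt : 1 < L / μ := (one_lt_div hμ).2 hL
    have hs1 : 1 < s := by nlinarith
    have hμs : μ * s ^ 2 = L := by rw [hs2]; field_simp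
    have hsne : s + 1 ≠ 0 := by linarith
    have hq : (L - μ) / 4 * (1 - q) ^ 2 = μ * q := by
      rw [hqdef]
      field_simp
      ring_nf
      nlinarith [hμs]
    have hDxs : D xs = 0 := by
      apply lp.ext
      funext j
      have hco : (D xs : ∀ _ : ℕ, ℝ) j
          = (L - μ) / 4 * (A xs) j - (L - μ) / 4 * e0 j + μ * xs j := by
        simp [hD, lp.coeFn_add, lp.coeFn_sub, lp.coeFn_smul]; rfl
      have hz : ((0 : lp (fun _ : ℕ => ℝ) 2) : ∀ _ : ℕ, ℝ) j = 0 := by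
        rw [lp.coeFn_zero]; rfl
      rw [hz, hco]
      rcases j with _ | n
      · rw [hA0, hxs 0, hxs 1, he0app 0]
        norm_num
        linear_combination -hq
      · rw [hA xs (n + 1) (by omega), he0app (n + 1)]
        simp only [Nat.add_sub_cancel]
        norm_num
        rw [hxs n, hxs (n + 1), hxs (n + 2)]
        linear_combination (-(q ^ (n + 1))) * hq
    rw [isMinOn_iff]
    intro y _
    have hkey := key xs (y - xs)
    rw [add_sub_cancel, hDxs, inner_zero_left] at hkey
    nlinarith [hpsd (y - xs), sq_nonneg ‖y - xs‖, hkey]
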